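/- Let R be a finite commutative ring with q elements admitting a generating character, fix a level structure with s levels of sizes n_1,…,n_s, let C be an R-submodule of R^N with N = n_1+⋯+n_s, and let z_1,…,z_s ∈ ℂ. Then the poset level weight enumerator of the dual code satisfies ∑_{v ∈ C^⊥} ∏_{j=1}^s z_j^{w(v^j)} = (1/|C|) ∑_{u ∈ C} ∏_{j=1}^s ( ∑_{p=0}^{n_j} [ ∑_{a=0}^{p} (−1)^a (q−1)^{p−a} · C(w(u^j), a) · C(n_j − w(u^j), p−a) ] z_j^p ), where C(m,k) denotes the binomial coefficient (with C(m,k) = 0 for k > m). -/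

import Mathlib

open scoped Classical

lemma addChar_map_sum {A M ι : Type*} [AddCommMonoid A] [CommMonoid M]
    (χ : AddChar A M) (s : Finset ι) (f : ι → A) :
    χ (∑ i ∈ s, f i) = ∏ i ∈ s, χ (f i) := by
  induction s using Finset.cons_induction with
  | empty => simp
  | cons a s ha ih => rw [Finset.sum_cons, Finset.prod_cons, AddChar.map_add_eq_mul, ih]

lemma genchar_sum_zero {R : Type*} [CommRing R] [Fintype R]
    (χ : AddChar R ℂ) (hχ : ∀ J : Ideal R, (∀ a ∈ J, χ a = 1) → J = ⊥)
    {a : R} (ha : a ≠ 0) : ∑ r : R, χ (a * r) = 0 := by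
  have h : (χ.mulShift a) ≠ 0 := by
    intro h0
    apply ha
    rw [← Ideal.span_singleton_eq_bot]
    apply hχ
    intro x hx
    obtain ⟨b, hb⟩ := Ideal.mem_span_singleton'.mp hx
    have := DFunLike.congr_fun h0 b
    simpa [AddChar.mulShift_apply, ← hb, mul_comm] using this
  have := AddChar.sum_eq_zero_iff_ne_zero.mpr h
  simpa [AddChar.mulShift_apply] using this

lemma key_sum {R : Type*} [CommRing R] [Fintype R] [DecidableEq R]
    (χ : AddChar R ℂ) (hχ : ∀ J : Ideal R, (∀ a ∈ J, χ a = 1) → J = ⊥)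
    (a : R) (z : ℂ) :
    ∑ r : R, χ (a * r) * (if r ≠ 0 then z else 1)
      = if a ≠ 0 then 1 - z else 1 + ((Fintype.card R : ℂ) - 1) * z := by
  by_cases ha : a = 0
  · subst ha
    rw [if_neg (by simp)]
    simp only [zero_mul, AddChar.map_zero_eq_one, one_mul]
    rw [Finset.sum_ite, Finset.sum_const, Finset.sum_const]
    have h1 : (Finset.univ.filter (fun r : R => ¬ r ≠ 0)).card = 1 := by
      simp only [not_ne_iff]
      exact Finset.card_eq_one.mpr ⟨0, by ext x; simp⟩
    have h2 : (Finset.univ.filter (fun r : R => r ≠ 0)).card = Fintype.card R - 1 := by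
      have h := Finset.card_filter_add_card_filter_not (s := (Finset.univ : Finset R))
        (p := fun r : R => r ≠ 0)
      rw [h1] at h
      simp only [Finset.card_univ] at h
      omega
    rw [h1, h2]
    have hcard : 1 ≤ Fintype.card R := Fintype.card_pos
    rw [nsmul_eq_mul, one_smul, Nat.cast_sub hcard]
    push_cast
    ring
  · rw [if_pos ha]
    have step : ∀ r : R, χ (a * r) * (if r ≠ 0 then z else 1)
        = χ (a * r) * z + (if r = 0 then χ (a * r) * (1 - z) else 0) := by
      intro r
      by_cases hr : r = 0 <;> simp [hr] <;> ring
    rw [Finset.sum_congr rfl (fun r _ => step r), Finset.sum_add_distrib,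
 
      ← Finset.sum_mul, genchar_sum_zero χ hχ ha, Finset.sum_ite_eq' Finset.univ (0 : R)]
    simp
lemma zpow_hamming {R : Type*} [DecidableEq R] [Zero R] {m : ℕ} (v : Fin m → R) (z : ℂ) :
    z ^ hammingNorm v = ∏ k, (if v k ≠ 0 then z else 1) := by
  rw [Finset.prod_ite, Finset.prod_const, Finset.prod_const, one_pow, mul_one, hammingNorm]

lemma level_sum {R : Type*} [CommRing R] [Fintype R] [DecidableEq R]
    (χ : AddChar R ℂ) (hχ : ∀ J : Ideal R, (∀ a ∈ J, χ a = 1) → J = ⊥)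
    {m : ℕ} (a : Fin m → R) (z : ℂ) :
    ∑ w : Fin m → R, χ (∑ k, a k * w k) * z ^ hammingNorm w
      = (1 - z) ^ hammingNorm a
        * (1 + ((Fintype.card R : ℂ) - 1) * z) ^ (m - hammingNorm a) := by
  have h1 : ∀ w : Fin m → R, χ (∑ k, a k * w k) * z ^ hammingNorm w
      = ∏ k, (χ (a k * w k) * (if w k ≠ 0 then z else 1)) := fun w => by
    rw [addChar_map_sum, zpow_hamming, Finset.prod_mul_distrib]
  rw [Finset.sum_congr rfl (fun w _ => h1 w),
    ← Fintype.prod_sum (fun k r => χ (a k * r) * (if r ≠ 0 then z else 1))]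
  have h2 : ∀ k, (∑ r : R, χ (a k * r) * (if r ≠ 0 then z else 1))
      = if a k ≠ 0 then 1 - z else 1 + ((Fintype.card R : ℂ) - 1) * z :=
    fun k => key_sum χ hχ (a k) z
  rw [Finset.prod_congr rfl (fun k _ => h2 k), Finset.prod_ite, Finset.prod_const,
    Finset.prod_const]
  have hcard2 : (Finset.univ.filter (fun k => ¬ a k ≠ 0)).card = m - hammingNorm a := by
    have h := Finset.card_filter_add_card_filter_not
      (s := (Finset.univ : Finset (Fin m))) (p := fun k => a k ≠ 0)
    have h3 : (Finset.univ.filter (fun k => a k ≠ 0)).card = hammingNorm a := rfl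
    simp only [Finset.card_univ, Fintype.card_fin] at h
    omega
  rw [hcard2]
  rfl

lemma sum_reindex (m : ℕ) (F : ℕ → ℕ → ℂ) (h0 : ∀ a b, m < a + b → F a b = 0) :
    ∑ a ∈ Finset.range (m+1), ∑ b ∈ Finset.range (m+1), F a b
      = ∑ p ∈ Finset.range (m+1), ∑ a ∈ Finset.range (p+1), F a (p - a) := by
  rw [← Finset.sum_product', Finset.sum_sigma' (Finset.range (m+1)) (fun p => Finset.range (p+1)) (fun a b => F b (a - b))]
  rw [← Finset.sum_filter_add_sum_filter_not
    (Finset.range (m+1) ×ˢ Finset.range (m+1)) (fun x : ℕ × ℕ => x.1 + x.2 ≤ m)]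
  have hz : ∑ x ∈ (Finset.range (m+1) ×ˢ Finset.range (m+1)).filter
      (fun x : ℕ × ℕ => ¬ x.1 + x.2 ≤ m), F x.1 x.2 = 0 := by
    apply Finset.sum_eq_zero
    intro x hx
    simp only [Finset.mem_filter, not_le] at hx
    exact h0 x.1 x.2 hx.2
  rw [hz, add_zero]
  apply Finset.sum_nbij' (i := fun x : ℕ × ℕ => (⟨x.1 + x.2, x.1⟩ : Σ _ : ℕ, ℕ))
    (j := fun y : Σ _ : ℕ, ℕ => (y.2, y.1 - y.2))
  · intro x hx
    simp only [Finset.mem_filter, Finset.mem_product, Finset.mem_range] at hx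
    simp only [Finset.mem_sigma, Finset.mem_range]
    omega
  · intro y hy
    simp only [Finset.mem_sigma, Finset.mem_range] at hy
    simp only [Finset.mem_filter, Finset.mem_product, Finset.mem_range]
    omega
  · intro x hx
    simp
  · intro y hy
    simp only [Finset.mem_sigma, Finset.mem_range] at hy
    ext
    · simp; omega
    · simp
  · intro x hx
    simp

lemma binom_expand (m w : ℕ) (hw : w ≤ m) (c z : ℂ) :
    (1 - z) ^ w * (1 + c * z) ^ (m - w)
      = ∑ p ∈ Finset.range (m+1), (∑ a ∈ Finset.range (p+1),
          (-1:ℂ)^a * c^(p-a) * (w.choose a : ℂ) * ((m - w).choose (p-a) : ℂ)) * z^p := by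
  have e1 : (1 - z) ^ w = ∑ a ∈ Finset.range (m+1),
      (-1:ℂ)^a * (w.choose a : ℂ) * z^a := by
    have : (1 - z) ^ w = ((-z) + 1) ^ w := by ring_nf
    rw [this, add_pow]
    rw [Finset.sum_subset (Finset.range_subset_range.mpr (by omega : w + 1 ≤ m + 1))]
    · exact Finset.sum_congr rfl fun a _ => by rw [neg_pow]; ring
    · intro a _ ha
      have : w < a := by simp only [Finset.mem_range] at *; omega
      simp [Nat.choose_eq_zero_of_lt this]
  have e2 : (1 + c * z) ^ (m - w) = ∑ b ∈ Finset.range (m+1),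
      c^b * ((m - w).choose b : ℂ) * z^b := by
    have : (1 + c * z) ^ (m - w) = ((c * z) + 1) ^ (m - w) := by ring_nf
    rw [this, add_pow]
    rw [Finset.sum_subset (Finset.range_subset_range.mpr (by omega : (m - w) + 1 ≤ m + 1))]
    · exact Finset.sum_congr rfl fun b _ => by rw [mul_pow]; ring
    · intro b _ hb
      have : m - w < b := by simp only [Finset.mem_range] at *; omega
      simp [Nat.choose_eq_zero_of_lt this]
  rw [e1, e2, Finset.sum_mul_sum]
  have e3 : ∀ a b : ℕ, ((-1:ℂ)^a * (w.choose a : ℂ) * z^a) * (c^b * ((m - w).choose b : ℂ) * z^b)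
      = (-1:ℂ)^a * c^b * (w.choose a : ℂ) * ((m - w).choose b : ℂ) * z^(a+b) := by
    intro a b; rw [pow_add]; ring
  calc ∑ a ∈ Finset.range (m+1), ∑ b ∈ Finset.range (m+1),
        ((-1:ℂ)^a * (w.choose a : ℂ) * z^a) * (c^b * ((m - w).choose b : ℂ) * z^b)
      = ∑ a ∈ Finset.range (m+1), ∑ b ∈ Finset.range (m+1),
        (-1:ℂ)^a * c^b * (w.choose a : ℂ) * ((m - w).choose b : ℂ) * z^(a+b) := by
        exact Finset.sum_congr rfl fun a _ => Finset.sum_congr rfl fun b _ => e3 a b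
    _ = ∑ p ∈ Finset.range (m+1), ∑ a ∈ Finset.range (p+1),
        (-1:ℂ)^a * c^(p-a) * (w.choose a : ℂ) * ((m - w).choose (p-a) : ℂ) * z^(a+(p-a)) := by
        apply sum_reindex
        intro a b hab
        by_cases haw : a ≤ w
        · have : m - w < b := by omega
          simp [Nat.choose_eq_zero_of_lt this]
        · simp [Nat.choose_eq_zero_of_lt (by omega : w < a)]
    _ = ∑ p ∈ Finset.range (m+1), (∑ a ∈ Finset.range (p+1),
        (-1:ℂ)^a * c^(p-a) * (w.choose a : ℂ) * ((m - w).choose (p-a) : ℂ)) * z^p := by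
        refine Finset.sum_congr rfl fun p _ => ?_
        rw [Finset.sum_mul]
        refine Finset.sum_congr rfl fun a ha => ?_
        simp only [Finset.mem_range] at ha
        rw [Nat.add_sub_cancel' (by omega : a ≤ p)]

def innerL {R : Type*} [CommRing R] {s : ℕ} {n : Fin s → ℕ}
    (v : Π j : Fin s, Fin (n j) → R) : (Π j : Fin s, Fin (n j) → R) →ₗ[R] R where
  toFun u := ∑ j, ∑ k, u j k * v j k
  map_add' u w := by simp [add_mul, Finset.sum_add_distrib]
  map_smul' r u := by simp [Finset.mul_sum, mul_assoc]

lemma code_char_sum {R : Type*} [CommRing R] [Fintype R] {s : ℕ} {n : Fin s → ℕ}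
    (χ : AddChar R ℂ) (hχ : ∀ J : Ideal R, (∀ a ∈ J, χ a = 1) → J = ⊥)
    (C : Submodule R (Π j : Fin s, Fin (n j) → R))
    (v : Π j : Fin s, Fin (n j) → R)
    (hv : ¬ ∀ u ∈ C, ∑ j, ∑ k, u j k * v j k = 0) :
    ∑ u : C, χ (∑ j, ∑ k, (u : Π j : Fin s, Fin (n j) → R) j k * v j k) = 0 := by
  push_neg at hv
  obtain ⟨u₀, hu₀C, hu₀⟩ := hv
  have hL : ∀ u : Π j : Fin s, Fin (n j) → R,
      innerL v u = ∑ j, ∑ k, u j k * v j k := fun u => rfl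
  set ψ : AddChar (↥C) ℂ :=
    χ.compAddMonoidHom (((innerL v).comp C.subtype).toAddMonoidHom) with hψ
  have hψne : ψ ≠ 0 := by
    intro h0
    have hone : ∀ u : C, χ (innerL v (u : Π j : Fin s, Fin (n j) → R)) = 1 := by
      intro u
      have := DFunLike.congr_fun h0 u
      simpa [hψ] using this
    have hJ : Submodule.map (innerL v) C = ⊥ := by
      apply hχ
      rintro a ⟨u, huC, rfl⟩
      exact hone ⟨u, huC⟩
    apply hu₀
    rw [← hL]
    have : innerL v u₀ ∈ Submodule.map (innerL v) C := ⟨u₀, hu₀C, rfl⟩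
    rw [hJ] at this
    exact this
  have := AddChar.sum_eq_zero_iff_ne_zero.mpr hψne
  simpa [hψ, hL] using this

/-- MacWilliams-type identity for the poset level weight enumerator
`P_W(C) = ∑_{u ∈ C} ∏_j z_j^{w(u^j)}` of a linear code over a finite commutative
Frobenius ring with `q = |R|` elements. `R^N` is identified with `Π j, R^{n j}`
and `w` is the Hamming weight (`hammingNorm`). -/
theorem poset_level_weight_enumerator_macwilliams
    {R : Type*} [CommRing R] [Fintype R] [DecidableEq R]
    (hR : ∃ χ : AddChar R ℂ, ∀ J : Ideal R, (∀ a ∈ J, χ a = 1) → J = ⊥)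
    (s : ℕ) (hs : 0 < s) (n : Fin s → ℕ) (hn : ∀ j, 0 < n j)
    (C : Submodule R (Π j : Fin s, Fin (n j) → R))
    (z : Fin s → ℂ) :
    ∑ v ∈ Finset.univ.filter
        (fun v : Π j : Fin s, Fin (n j) → R => ∀ u ∈ C, ∑ j, ∑ k, u j k * v j k = 0),
      ∏ j, z j ^ hammingNorm (v j)
    = (Fintype.card C : ℂ)⁻¹ *
        ∑ u : C, ∏ j,
          ∑ p ∈ Finset.range (n j + 1),
            (∑ a ∈ Finset.range (p + 1),
              (-1 : ℂ) ^ a * ((Fintype.card R : ℂ) - 1) ^ (p - a) *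
                (Nat.choose (hammingNorm ((u : Π j : Fin s, Fin (n j) → R) j)) a : ℂ) *
                (Nat.choose (n j - hammingNorm ((u : Π j : Fin s, Fin (n j) → R) j))
                  (p - a) : ℂ)) * z j ^ p := by
  obtain ⟨χ, hχ⟩ := hR
  have hCne : (Fintype.card C : ℂ) ≠ 0 := Nat.cast_ne_zero.mpr Fintype.card_ne_zero
  rw [Finset.sum_filter]
  have hpt : ∀ v : Π j : Fin s, Fin (n j) → R,
      (if (∀ u ∈ C, ∑ j, ∑ k, u j k * v j k = 0) then ∏ j, z j ^ hammingNorm (v j) else 0)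
      = (Fintype.card C : ℂ)⁻¹ *
        ((∑ u : C, χ (∑ j, ∑ k, (u : Π j : Fin s, Fin (n j) → R) j k * v j k))
          * ∏ j, z j ^ hammingNorm (v j)) := by
    intro v
    by_cases hP : ∀ u ∈ C, ∑ j, ∑ k, u j k * v j k = 0
    · rw [if_pos hP]
      have h1 : ∀ u : C,
          χ (∑ j, ∑ k, (u : Π j : Fin s, Fin (n j) → R) j k * v j k) = 1 := fun u => by
        rw [hP u.1 u.2, AddChar.map_zero_eq_one]
      rw [Finset.sum_congr rfl (fun u _ => h1 u), Finset.sum_const, Finset.card_univ,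
        nsmul_eq_mul, mul_one, ← mul_assoc, inv_mul_cancel₀ hCne, one_mul]
    · rw [if_neg hP, code_char_sum χ hχ C v hP, zero_mul, mul_zero]
  rw [Finset.sum_congr rfl (fun v _ => hpt v), ← Finset.mul_sum]
  congr 1
  have hsm : ∀ v : Π j : Fin s, Fin (n j) → R,
      (∑ u : C, χ (∑ j, ∑ k, (u : Π j : Fin s, Fin (n j) → R) j k * v j k))
        * ∏ j, z j ^ hammingNorm (v j)
      = ∑ u : C, χ (∑ j, ∑ k, (u : Π j : Fin s, Fin (n j) → R) j k * v j k)
          * ∏ j, z j ^ hammingNorm (v j) := fun v => Finset.sum_mul _ _ _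
  rw [Finset.sum_congr rfl (fun v _ => hsm v), Finset.sum_comm]
  refine Finset.sum_congr rfl fun u _ => ?_
  have hu1 : ∀ v : Π j : Fin s, Fin (n j) → R,
      χ (∑ j, ∑ k, (u : Π j : Fin s, Fin (n j) → R) j k * v j k)
        * ∏ j, z j ^ hammingNorm (v j)
      = ∏ j, (χ (∑ k, (u : Π j : Fin s, Fin (n j) → R) j k * v j k)
          * z j ^ hammingNorm (v j)) := fun v => by
    rw [addChar_map_sum, ← Finset.prod_mul_distrib]
  rw [Finset.sum_congr rfl (fun v _ => hu1 v),
    ← Fintype.prod_sum (fun j w => χ (∑ k, (u : Π j : Fin s, Fin (n j) → R) j k * w k)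
        * z j ^ hammingNorm w)]
  refine Finset.prod_congr rfl fun j _ => ?_
  rw [level_sum χ hχ]
  have hw : hammingNorm ((u : Π j : Fin s, Fin (n j) → R) j) ≤ n j := by
    have := Finset.card_filter_le (Finset.univ : Finset (Fin (n j)))
      (fun k => (u : Π j : Fin s, Fin (n j) → R) j k ≠ 0)
    simpa [hammingNorm] using this
  exact binom_expand (n j) _ hw _ (z j)
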